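/- Let K be a field of characteristic 0, let M be a K[[t]]-module that is free with basis η⁽⁰⁾, …, η⁽ⁿ⁻¹⁾ and carries a derivation ∇ (over θ = t·d/dt) with ∇η⁽ⁱ⁾ = η⁽ⁱ⁺¹⁾ for i < n−1. Suppose ⟨·,·⟩ : M × M → K[[t]] is K[[t]]-bilinear and horizontal (i.e., θ⟨x,y⟩ = ⟨∇x,y⟩ + ⟨x,∇y⟩), and ⟨η⁽⁰⁾, η⁽ⁱ⁾⟩ = 0 for all 0 ≤ i < n−1. Then for all 0 ≤ i ≤ n−1, ⟨η⁽ⁱ⁾, η⁽ⁿ⁻¹⁻ⁱ⁾⟩ = (−1)ⁱ·γ, where γ = ⟨η⁽⁰⁾, η⁽ⁿ⁻¹⁾⟩. -/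

import Mathlib

open PowerSeries

/-- The logarithmic derivative `θ = t·d/dt` on formal power series. -/
noncomputable def theta {K : Type*} [CommRing K] (f : K⟦X⟧) : K⟦X⟧ :=
  PowerSeries.X * PowerSeries.derivative K f

lemma theta_zero {K : Type*} [CommRing K] : theta (0 : K⟦X⟧) = 0 := by
  simp [theta]

/-- Parity lemma computation: if `⟨η⁰, ηⁱ⟩ = 0` for `i < n-1` then
`⟨ηⁱ, η^{n-1-i}⟩ = (-1)ⁱ γ` with `γ = ⟨η⁰, η^{n-1}⟩`. -/
theorem pairing_antidiagonal {K : Type*} [Field K] [CharZero K] {n : ℕ} (hn : 1 ≤ n)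
    {M : Type*} [AddCommGroup M] [Module K⟦X⟧ M]
    (η : ℕ → M) (b : Module.Basis (Fin n) K⟦X⟧ M) (hb : ∀ i : Fin n, b i = η i)
    (D : M →+ M)
    (hD : ∀ (f : K⟦X⟧) (x : M), D (f • x) = theta f • x + f • D x)
    (hDη : ∀ i, i < n - 1 → D (η i) = η (i + 1))
    (B : M →ₗ[K⟦X⟧] M →ₗ[K⟦X⟧] K⟦X⟧)
    (hhor : ∀ x y : M, theta (B x y) = B (D x) y + B x (D y))
    (hvan : ∀ i, i < n - 1 → B (η 0) (η i) = 0) :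
    ∀ i, i ≤ n - 1 →
      B (η i) (η (n - 1 - i)) = (-1) ^ i * B (η 0) (η (n - 1)) := by
  have key : ∀ i j, i + j ≤ n - 1 → B (η i) (η j) = (-1) ^ i * B (η 0) (η (i + j)) := by
    intro i
    induction i with
    | zero => intro j _; simp
    | succ i ih =>
      intro j h
      have hi : i < n - 1 := by omega
      have hj : j < n - 1 := by omega
      have h0 : B (η i) (η j) = 0 := by
        rw [ih j (by omega), hvan (i + j) (by omega), mul_zero]
      have hh := hhor (η i) (η j)
      rw [h0, theta_zero, hDη i hi, hDη j hj] at hh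
      have h1 : B (η i) (η (j + 1)) = (-1) ^ i * B (η 0) (η (i + (j + 1))) :=
        ih (j + 1) (by omega)
      have : B (η (i + 1)) (η j) = - ((-1) ^ i * B (η 0) (η (i + (j + 1)))) := by
        rw [← h1]; exact eq_neg_of_add_eq_zero_left hh.symm
      rw [this]
      have : i + (j + 1) = i + 1 + j := by omega
      rw [this]
      ring
  intro i hi
  have := key i (n - 1 - i) (by omega)
  rwa [Nat.add_sub_cancel' hi] at this
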